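/- Let m ≥ 1, x ≥ 1, and let X ⊆ ℂ^m be a set with σ(X) = X such that every finite subset of X with at most 2x elements is ℂ-linearly independent. Let v ∈ ℝ^m and let S ⊆ X be a finite set with |S| ≤ x such that ι(v) ∈ span_ℂ S and ι(v) ∉ span_ℂ S' for every proper subset S' ⊊ S. Then σ(S) = S. (The unique minimal decomposition of a real point is invariant under complex conjugation.) -/

import Mathlib

/-- Coordinatewise complex conjugation on `ℂ^m`. -/
def conjPi {m : ℕ} (w : Fin m → ℂ) : Fin m → ℂ := fun i => (starRingEnd ℂ) (w i)

/-- The natural inclusion `ℝ^m → ℂ^m`. -/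
def inclPi {m : ℕ} (v : Fin m → ℝ) : Fin m → ℂ := fun i => (v i : ℂ)

lemma conjPi_involutive {m : ℕ} : Function.Involutive (conjPi (m := m)) := by
  intro w; funext i; simp [conjPi]

lemma conjPi_inclPi {m : ℕ} (v : Fin m → ℝ) : conjPi (inclPi v) = inclPi v := by
  funext i; simp [conjPi, inclPi]

open Classical in
theorem minimal_decomposition_of_real_point_is_conj_invariant (m x : ℕ)
    (hm : 1 ≤ m) (hx : 1 ≤ x) (X : Set (Fin m → ℂ)) (hXσ : conjPi '' X = X)
    (hX : ∀ s : Finset (Fin m → ℂ), (s : Set (Fin m → ℂ)) ⊆ X → s.card ≤ 2 * x →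
      LinearIndependent ℂ (fun w : (s : Set (Fin m → ℂ)) => (w : Fin m → ℂ)))
    (v : Fin m → ℝ) (S : Finset (Fin m → ℂ)) (hSX : (S : Set (Fin m → ℂ)) ⊆ X)
    (hcard : S.card ≤ x)
    (hv : inclPi v ∈ Submodule.span ℂ (S : Set (Fin m → ℂ)))
    (hmin : ∀ S' : Finset (Fin m → ℂ), S' ⊂ S →
      inclPi v ∉ Submodule.span ℂ (S' : Set (Fin m → ℂ))) :
    S.image conjPi = S := by
  classical
  obtain ⟨c, hcs, hc⟩ := Submodule.mem_span_finset.mp hv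
  set σS := S.image conjPi with hσS
  -- coefficients are nonzero
  have hne : ∀ s ∈ S, c s ≠ 0 := by
    intro s hs h0
    refine hmin (S.erase s) (Finset.erase_ssubset hs) ?_
    rw [Submodule.mem_span_finset]
    refine ⟨c, fun y hy => Finset.mem_erase.mpr ⟨fun h => hy (by subst h; exact h0), hcs hy⟩, ?_⟩
    rw [Finset.sum_erase _ (by rw [h0, zero_smul]), hc]
  -- the union
  set T := S ∪ σS with hT
  have hTX : (T : Set (Fin m → ℂ)) ⊆ X := by
    intro w hw
    simp only [T, Finset.coe_union, Set.mem_union] at hw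
    rcases hw with hw | hw
    · exact hSX hw
    · rw [← hXσ]
      simp only [σS, Finset.coe_image] at hw
      exact Set.image_mono (f := conjPi) hSX hw
  have hTcard : T.card ≤ 2 * x := by
    calc T.card ≤ S.card + σS.card := Finset.card_union_le S σS
    _ ≤ S.card + S.card := by have : σS.card ≤ S.card := Finset.card_image_le; omega
    _ ≤ 2 * x := by omega
  have li := hX T hTX hTcard
  -- conjugated representation
  have hc2 : ∑ t ∈ S, (starRingEnd ℂ) (c t) • conjPi t = inclPi v := by
    have := congrArg conjPi hc
    rw [conjPi_inclPi] at this
    rw [← this]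
    funext i
    simp [conjPi, Finset.sum_apply, Pi.smul_apply, smul_eq_mul, map_sum, map_mul]
  have hc3 : ∑ w ∈ σS, (starRingEnd ℂ) (c (conjPi w)) • w = inclPi v := by
    rw [hσS, Finset.sum_image (fun a _ b _ h => conjPi_involutive.injective h)]
    rw [← hc2]
    apply Finset.sum_congr rfl
    intro t _
    rw [conjPi_involutive t]
  -- combine over T
  set G : (Fin m → ℂ) → ℂ := fun w =>
    (if w ∈ S then c w else 0) - (if w ∈ σS then (starRingEnd ℂ) (c (conjPi w)) else 0) with hG
  have h1 : ∑ w ∈ T, (if w ∈ S then c w else 0) • w = inclPi v := by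
    rw [← Finset.sum_subset (Finset.subset_union_left)
      (fun w _ hw => by rw [if_neg hw, zero_smul])]
    rw [← hc]
    exact Finset.sum_congr rfl fun w hw => by rw [if_pos hw]
  have h2 : ∑ w ∈ T, (if w ∈ σS then (starRingEnd ℂ) (c (conjPi w)) else 0) • w = inclPi v := by
    rw [← Finset.sum_subset (Finset.subset_union_right)
      (fun w _ hw => by rw [if_neg hw, zero_smul])]
    rw [← hc3]
    exact Finset.sum_congr rfl fun w hw => by rw [if_pos hw]
  have hsum : ∑ w ∈ T, G w • w = 0 := by
    simp only [hG, sub_smul, Finset.sum_sub_distrib, h1, h2, sub_self]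
  -- use linear independence
  have hG0 : ∀ w ∈ T, G w = 0 := by
    intro w hw
    have hsum' : ∑ i ∈ T.attach, G i.1 • (i.1 : Fin m → ℂ) = 0 := by
      rw [Finset.sum_attach T (fun w => G w • w)]; exact hsum
    have := linearIndependent_iff'.mp li T.attach (fun i => G i.1) hsum'
      ⟨w, hw⟩ (Finset.mem_attach _ _)
    exact this
  have hsub : S ⊆ σS := by
    intro s hs
    have hsT : s ∈ T := Finset.mem_union_left _ hs
    have h := hG0 s hsT
    simp only [hG, if_pos hs, sub_eq_zero] at h
    by_contra hns
    rw [if_neg hns] at h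
    exact hne s hs h
  exact (Finset.eq_of_subset_of_card_le hsub Finset.card_image_le).symm
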